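/- Let ℕ carry the discrete topology and the convex structure p·i + (1−p)·j = min(i,j) for p ∈ (0,1). Then the map ε : G ℕ → ℕ sending a probability measure P = ∑_i p_i δ_i to min{ i ∈ ℕ | p_i > 0 } (the minimum of the support of P) is well-defined and is countably affine: ε(∑_{k∈ℕ} q_k P_k) = min over k with q_k > 0 of ε(P_k). -/

import Mathlib

open MeasureTheory ENNReal

/-- The expectation map on probability measures on `ℕ` (with the convex
structure `p·i + (1−p)·j = min i j`): it sends `P` to the minimum of its
support. -/
noncomputable def epsNat (P : @Measure ℕ ⊤) : ℕ := sInf {i : ℕ | P {i} ≠ 0}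

lemma support_nonempty (μ : @Measure ℕ ⊤) (hμ : @IsProbabilityMeasure ℕ ⊤ μ) :
    {i : ℕ | μ {i} ≠ 0}.Nonempty := by
  by_contra h
  rw [Set.not_nonempty_iff_eq_empty] at h
  have h0 : ∀ i : ℕ, μ {i} = 0 := by
    intro i
    by_contra hi
    exact (Set.eq_empty_iff_forall_notMem.mp h i) hi
  have huniv : μ Set.univ = 0 := by
    have : (Set.univ : Set ℕ) = ⋃ i : ℕ, {i} := by
      ext x; simp
    rw [this]
    refine le_antisymm ?_ zero_le
    calc μ (⋃ i : ℕ, {i}) ≤ ∑' i : ℕ, μ {i} := measure_iUnion_le _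
      _ = 0 := by simp [h0]
  rw [hμ.measure_univ] at huniv
  exact one_ne_zero huniv

/-- The map `ε : G ℕ → ℕ`, `P ↦ min{ i | P {i} > 0 }`, is
well-defined (the support is nonempty) and countably affine:
`ε (∑ₖ q k • P k) = min { ε (P k) | q k > 0 }`. -/
theorem stmt7 (q : ℕ → ℝ≥0∞) (hq : ∑' k, q k = 1)
    (P : ℕ → @Measure ℕ ⊤) (hP : ∀ k, @IsProbabilityMeasure ℕ ⊤ (P k)) :
    (∀ k, {i : ℕ | P k {i} ≠ 0}.Nonempty) ∧
    {i : ℕ | (@Measure.sum ℕ ℕ ⊤ fun k => q k • P k) {i} ≠ 0}.Nonempty ∧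
    epsNat (@Measure.sum ℕ ℕ ⊤ fun k => q k • P k) =
      sInf ((fun k => epsNat (P k)) '' {k : ℕ | q k ≠ 0}) := by
  have hsupp : ∀ k, {i : ℕ | P k {i} ≠ 0}.Nonempty := fun k => support_nonempty _ (hP k)
  -- evaluate sum measure on singletons
  have hmeas : ∀ s : Set ℕ, MeasurableSet[⊤] s := fun s => trivial
  have hsum : ∀ i : ℕ, (@Measure.sum ℕ ℕ ⊤ fun k => q k • P k) {i} = ∑' k, q k * P k {i} := by
    intro i
    rw [Measure.sum_apply _ (hmeas _)]
    simp [Measure.smul_apply]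
  -- characterize membership
  have hchar : ∀ i : ℕ, ((@Measure.sum ℕ ℕ ⊤ fun k => q k • P k) {i} ≠ 0) ↔
      ∃ k, q k ≠ 0 ∧ P k {i} ≠ 0 := by
    intro i
    rw [hsum i]
    constructor
    · intro h
      by_contra hc
      push_neg at hc
      apply h
      refine ENNReal.tsum_eq_zero.mpr fun k => ?_
      by_cases hk : q k = 0
      · simp [hk]
      · simp [hc k hk]
    · rintro ⟨k, hk, hki⟩ h
      rcases mul_eq_zero.mp (ENNReal.tsum_eq_zero.mp h k) with h1 | h2
      · exact hk h1
      · exact hki h2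
  -- there exists k with q k ≠ 0
  obtain ⟨k0, hk0⟩ : ∃ k, q k ≠ 0 := by
    by_contra h
    push_neg at h
    simp [h] at hq
  refine ⟨hsupp, ?_, ?_⟩
  · obtain ⟨i, hi⟩ := hsupp k0
    exact ⟨i, (hchar i).mpr ⟨k0, hk0, hi⟩⟩
  · -- main equality
    set A := {i : ℕ | (@Measure.sum ℕ ℕ ⊤ fun k => q k • P k) {i} ≠ 0}
    have hAne : A.Nonempty := by
      obtain ⟨i, hi⟩ := hsupp k0
      exact ⟨i, (hchar i).mpr ⟨k0, hk0, hi⟩⟩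
    have hBne : ((fun k => epsNat (P k)) '' {k : ℕ | q k ≠ 0}).Nonempty :=
      ⟨epsNat (P k0), k0, hk0, rfl⟩
    apply le_antisymm
    · -- sInf A ≤ sInf image
      obtain ⟨k, hk, hkeq⟩ := Nat.sInf_mem hBne
      rw [← hkeq]
      apply Nat.sInf_le
      have := Nat.sInf_mem (hsupp k)
      exact (hchar _).mpr ⟨k, hk, this⟩
    · obtain ⟨k, hk, hki⟩ := (hchar _).mp (Nat.sInf_mem hAne)
      calc sInf ((fun k => epsNat (P k)) '' {k : ℕ | q k ≠ 0})
          ≤ epsNat (P k) := Nat.sInf_le ⟨k, hk, rfl⟩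
        _ ≤ sInf A := Nat.sInf_le hki
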